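/- Let U be a family of infinite subsets of ℕ, M an infinite subset of ℕ, and α a finite subset of ℕ. Then there exists an infinite subset L of M such that either [α, L] is contained in the closure of U in the Ellentuck topology, or [α, L] ⊆ [ℕ] \ U. -/
import Mathlib


/-- The space `[ℕ]` of infinite subsets of `ℕ`. -/
abbrev InfNat := {A : Set ℕ // A.Infinite}

/-- The Ellentuck basic set `[α, M] = {α ∪ N : N ∈ [M], max α < min N}`. -/
def EllSet (α : Finset ℕ) (M : Set ℕ) : Set InfNat :=
  {X | ↑α ⊆ X.1 ∧ X.1 \ ↑α ⊆ M ∧ ∀ a ∈ α, ∀ b ∈ X.1, b ∉ α → a < b}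

/-- The Ellentuck topology on `[ℕ]`, generated by the sets `[α, M]`. -/
def EllentuckTop : TopologicalSpace InfNat :=
  TopologicalSpace.generateFrom
    {S | ∃ (α : Finset ℕ) (M : Set ℕ), M.Infinite ∧ S = EllSet α M}

namespace EllAux

/-- `Meets U γ N` : the basic set `[γ, N]` meets `U`. -/
def Meets (U : Set InfNat) (γ : Finset ℕ) (N : Set ℕ) : Prop :=
  ∃ X : InfNat, X ∈ EllSet γ N ∧ X ∈ U

/-- `Accepts U γ N` : every infinite subset of `N` gives a basic set meeting `U`. -/
def Accepts (U : Set InfNat) (γ : Finset ℕ) (N : Set ℕ) : Prop :=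
  ∀ N' : Set ℕ, N' ⊆ N → N'.Infinite → Meets U γ N'

lemma EllSet_mono {γ : Finset ℕ} {N N' : Set ℕ} (h : N' ⊆ N) :
    EllSet γ N' ⊆ EllSet γ N := fun X hX => ⟨hX.1, fun y hy => h (hX.2.1 hy), hX.2.2⟩

lemma Accepts.mono {U γ} {N N' : Set ℕ} (h : N' ⊆ N) (hA : Accepts U γ N) :
    Accepts U γ N' := fun N'' h'' hi => hA N'' (h''.trans h) hi

lemma notMeets.mono {U γ} {N N' : Set ℕ} (h : N' ⊆ N) (hA : ¬ Meets U γ N) :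
    ¬ Meets U γ N' := fun ⟨X, hX, hXU⟩ => hA ⟨X, EllSet_mono h hX, hXU⟩

lemma decide_one (U : Set InfNat) (γ : Finset ℕ) (N : Set ℕ) (hN : N.Infinite) :
    ∃ N' : Set ℕ, N' ⊆ N ∧ N'.Infinite ∧ (Accepts U γ N' ∨ ¬ Meets U γ N') := by
  by_cases h : ∃ N', N' ⊆ N ∧ N'.Infinite ∧ ¬ Meets U γ N'
  · obtain ⟨N', h1, h2, h3⟩ := h
    exact ⟨N', h1, h2, Or.inr h3⟩
  · push_neg at h
    exact ⟨N, subset_rfl, hN, Or.inl (fun N' h1 h2 => h N' h1 h2)⟩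

lemma decide_family (U : Set InfNat) (F : Finset (Finset ℕ)) (N : Set ℕ) (hN : N.Infinite) :
    ∃ N' : Set ℕ, N' ⊆ N ∧ N'.Infinite ∧
      ∀ γ ∈ F, Accepts U γ N' ∨ ¬ Meets U γ N' := by
  classical
  induction F using Finset.induction with
  | empty => exact ⟨N, subset_rfl, hN, by simp⟩
  | @insert γ F hγ ih =>
    obtain ⟨N1, h1, h2, h3⟩ := ih
    obtain ⟨N2, g1, g2, g3⟩ := decide_one U γ N1 h2
    refine ⟨N2, g1.trans h1, g2, fun δ hδ => ?_⟩
    rcases Finset.mem_insert.1 hδ with rfl | hδ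
    · exact g3
    · rcases h3 δ hδ with h | h
      · exact Or.inl (h.mono g1)
      · exact Or.inr (notMeets.mono g1 h)

/-- Uniform eventual bound over a finite set. -/
lemma finset_bound {β : Type*} (s : Finset β) (P : β → ℕ → Prop)
    (h : ∀ x ∈ s, ∃ b, ∀ j, b ≤ j → P x j) :
    ∃ b, ∀ x ∈ s, ∀ j, b ≤ j → P x j := by
  classical
  induction s using Finset.induction with
  | empty => exact ⟨0, by simp⟩
  | @insert a s ha ih =>
    obtain ⟨b1, hb1⟩ := h a (Finset.mem_insert_self _ _)
    obtain ⟨b2, hb2⟩ := ih (fun x hx => h x (Finset.mem_insert_of_mem hx))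
    refine ⟨max b1 b2, fun x hx j hj => ?_⟩
    rcases Finset.mem_insert.1 hx with rfl | hx
    · exact hb1 j (le_trans (le_max_left _ _) hj)
    · exact hb2 x hx j (le_trans (le_max_right _ _) hj)

end EllAux
namespace EllAux

variable (U : Set InfNat) (Nseq : ℕ → Set ℕ) (n : ℕ → ℕ) (α : Finset ℕ)

/-- `Good s`: `s` consists of values of `n`, and `α ∪ s` is accepted at a stage capturing
all later values of `n`. -/
def Good (s : Finset ℕ) : Prop :=
  (∀ x ∈ s, ∃ i, n i = x) ∧
  ∃ i₀, Accepts U (α ∪ s) (Nseq i₀) ∧ ∀ j, (∀ x ∈ s, x < n j) → n j ∈ Nseq i₀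

variable {U Nseq n α}

lemma good_step
    (htail : ∀ i j, i ≤ j → n j ∈ Nseq i) (hsm : StrictMono n)
    (hdec : ∀ j (t : Finset ℕ), (∀ x ∈ t, ∃ i, i < j ∧ n i = x) →
      Accepts U (α ∪ insert (n j) t) (Nseq (j+1)) ∨
        ¬ Meets U (α ∪ insert (n j) t) (Nseq (j+1)))
    {t : Finset ℕ} (hG : Good U Nseq n α t) :
    ∃ J₀, ∀ j, J₀ ≤ j → Good U Nseq n α (insert (n j) t) := by
  classical
  obtain ⟨hmem, i₀, hAcc, hIn⟩ := hG
  set J : Set ℕ :=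
    {j | (∀ x ∈ t, x < n j) ∧ ¬ Meets U (α ∪ insert (n j) t) (Nseq (j+1))} with hJ
  have hJfin : J.Finite := by
    by_contra hinf
    have hinf : J.Infinite := hinf
    have hB : (n '' J).Infinite := hinf.image hsm.injective.injOn
    have hBsub : n '' J ⊆ Nseq i₀ := by
      rintro _ ⟨j, hj, rfl⟩; exact hIn j hj.1
    obtain ⟨X, hX, hXU⟩ := hAcc _ hBsub hB
    obtain ⟨h1, h2, h3⟩ := hX
    have hDinf : (X.1 \ ↑(α ∪ t)).Infinite := X.2.diff (α ∪ t).finite_toSet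
    set m := sInf (X.1 \ ↑(α ∪ t)) with hm_def
    have hm : m ∈ X.1 \ ↑(α ∪ t) := Nat.sInf_mem hDinf.nonempty
    obtain ⟨j, hjJ, hjm⟩ := h2 hm
    -- every element of `X.1` outside `α ∪ insert (n j) t` is `> n j` and lies in `Nseq (j+1)`
    have hout : ∀ x ∈ X.1, x ∉ (↑(α ∪ insert (n j) t) : Set ℕ) → n j < x ∧ x ∈ Nseq (j+1) := by
      intro x hx hxout
      have hxnot : x ∉ (↑(α ∪ t) : Set ℕ) := by
        intro hc
        apply hxout
        simp only [Finset.coe_union, Finset.coe_insert, Set.mem_union] at hc ⊢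
        rcases hc with hc | hc
        · exact Or.inl hc
        · exact Or.inr (Set.mem_insert_of_mem _ hc)
      have hxD : x ∈ X.1 \ ↑(α ∪ t) := ⟨hx, hxnot⟩
      have hge : m ≤ x := Nat.sInf_le hxD
      have hne : x ≠ n j := by
        intro rfl'
        apply hxout
        simp only [Finset.coe_union, Finset.coe_insert, Set.mem_union]
        exact Or.inr (by rw [rfl']; exact Set.mem_insert _ _)
      have hgt : n j < x := by
        rw [hjm]
        exact lt_of_le_of_ne hge (fun h => hne (by rw [← h, ← hjm]))
      obtain ⟨j', hj'J, hj'x⟩ := h2 hxD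
      have : j < j' := hsm.lt_iff_lt.1 (by rw [hjm, hj'x]; omega)
      exact ⟨hgt, by rw [← hj'x]; exact htail (j+1) j' this⟩
    apply hjJ.2
    refine ⟨X, ⟨?_, ?_, ?_⟩, hXU⟩
    · -- α ∪ insert (n j) t ⊆ X
      intro x hx
      simp only [Finset.coe_union, Finset.coe_insert, Set.mem_union] at hx
      rcases hx with hx | hx
      · exact h1 (by simp only [Finset.coe_union, Set.mem_union]; exact Or.inl hx)
      · rcases Set.mem_insert_iff.1 hx with rfl | hx
        · rw [← hjm] at hm; exact hm.1
        · exact h1 (by simp only [Finset.coe_union, Set.mem_union]; exact Or.inr hx)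
    · intro x hx
      exact (hout x hx.1 hx.2).2
    · intro a ha b hb hbnot
      have hb' := hout b hb (by simpa using hbnot)
      rcases Finset.mem_union.1 ha with ha | ha
      · -- a ∈ α : use the ordering from X ∈ EllSet (α ∪ t) _
        refine h3 a (Finset.mem_union_left _ ha) b hb ?_
        intro hc
        rcases Finset.mem_union.1 hc with hc | hc
        · exact hbnot (Finset.mem_union_left _ hc)
        · exact hbnot (Finset.mem_union_right _ (Finset.mem_insert_of_mem hc))
      · rcases Finset.mem_insert.1 ha with rfl | ha
        · exact hb'.1
        · refine h3 a (Finset.mem_union_right _ ha) b hb ?_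
          intro hc
          rcases Finset.mem_union.1 hc with hc | hc
          · exact hbnot (Finset.mem_union_left _ hc)
          · exact hbnot (Finset.mem_union_right _ (Finset.mem_insert_of_mem hc))
  -- J finite : get the bound
  obtain ⟨b, hb⟩ : ∃ b, ∀ j ∈ J, j ≤ b := by
    obtain ⟨b, hbmem⟩ := hJfin.bddAbove
    exact ⟨b, fun j hj => hbmem hj⟩
  obtain ⟨I, hI⟩ : ∃ I, ∀ x ∈ t, ∀ j, I ≤ j → x < n j := by
    apply finset_bound t (fun x j => x < n j)
    intro x hx
    obtain ⟨i, rfl⟩ := hmem x hx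
    exact ⟨i + 1, fun j hj => hsm (by omega)⟩
  refine ⟨max (b+1) I, fun j hj => ?_⟩
  have hxlt : ∀ x ∈ t, x < n j := fun x hx => hI x hx j (le_trans (le_max_right _ _) hj)
  have hjJ : j ∉ J := fun hc => by have := hb j hc; omega
  have hMeets : Meets U (α ∪ insert (n j) t) (Nseq (j+1)) := by
    by_contra hc
    exact hjJ ⟨hxlt, hc⟩
  have hidx : ∀ x ∈ t, ∃ i, i < j ∧ n i = x := by
    intro x hx
    obtain ⟨i, rfl⟩ := hmem x hx
    exact ⟨i, hsm.lt_iff_lt.1 (hxlt _ hx), rfl⟩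
  rcases hdec j t hidx with hA | hR
  · refine ⟨?_, j+1, hA, ?_⟩
    · intro x hx
      rcases Finset.mem_insert.1 hx with rfl | hx
      · exact ⟨j, rfl⟩
      · exact hmem x hx
    · intro j' hj'
      have : n j < n j' := hj' (n j) (Finset.mem_insert_self _ _)
      exact htail (j+1) j' (hsm.lt_iff_lt.1 this)
  · exact absurd hMeets hR

end EllAux
namespace EllAux

variable {U : Set InfNat} {Nseq : ℕ → Set ℕ} {n : ℕ → ℕ} {α : Finset ℕ}

lemma thinning
    (htail : ∀ i j, i ≤ j → n j ∈ Nseq i) (hsm : StrictMono n)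
    (hdec : ∀ j (t : Finset ℕ), (∀ x ∈ t, ∃ i, i < j ∧ n i = x) →
      Accepts U (α ∪ insert (n j) t) (Nseq (j+1)) ∨
        ¬ Meets U (α ∪ insert (n j) t) (Nseq (j+1)))
    (hG0 : Good U Nseq n α ∅) :
    ∃ T : Set ℕ, T.Infinite ∧ T ⊆ Set.range n ∧
      ∀ s : Finset ℕ, ↑s ⊆ T → Good U Nseq n α s := by
  classical
  set Inv : Finset ℕ → Prop := fun G => ∀ t : Finset ℕ, t ⊆ G.image n → Good U Nseq n α t
    with hInvDef
  have hInv0 : Inv ∅ := by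
    intro t ht
    rw [Finset.image_empty, Finset.subset_empty] at ht
    subst ht
    exact hG0
  have key : ∀ G : Finset ℕ, Inv G → ∃ j, (∀ i ∈ G, i < j) ∧ Inv (insert j G) := by
    intro G hG
    obtain ⟨b, hb⟩ := finset_bound (G.image n).powerset
      (fun t j => Good U Nseq n α (insert (n j) t))
      (fun t ht => good_step htail hsm hdec (hG t (Finset.mem_powerset.1 ht)))
    refine ⟨max b (G.sup id + 1), fun i hi => ?_, fun t ht => ?_⟩
    · have := Finset.le_sup (f := id) hi
      simp only [id] at this
      have h2 := le_max_right b (G.sup id + 1)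
      omega
    · rw [Finset.image_insert] at ht
      by_cases hc : n (max b (G.sup id + 1)) ∈ t
      · have hsub : t.erase (n (max b (G.sup id + 1))) ⊆ G.image n := by
          intro x hx
          have hx1 := Finset.mem_of_mem_erase hx
          have hx2 := Finset.ne_of_mem_erase hx
          exact (Finset.mem_insert.1 (ht hx1)).resolve_left hx2
        have := hb _ (Finset.mem_powerset.2 hsub) (max b (G.sup id + 1)) (le_max_left _ _)
        rwa [Finset.insert_erase hc] at this
      · exact hG t (fun x hx =>
          (Finset.mem_insert.1 (ht hx)).resolve_left (fun h => hc (h ▸ hx)))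
  choose! f hf1 hf2 using key
  set Gs : ℕ → Finset ℕ := fun r => Nat.rec ∅ (fun _ G => insert (f G) G) r with hGsDef
  have hGsSucc : ∀ r, Gs (r+1) = insert (f (Gs r)) (Gs r) := fun r => rfl
  have hGsInv : ∀ r, Inv (Gs r) := by
    intro r
    induction r with
    | zero => exact hInv0
    | succ r ih => rw [hGsSucc]; exact hf2 _ ih
  have hGsMono : ∀ r r', r ≤ r' → Gs r ⊆ Gs r' := by
    intro r r' h
    induction h with
    | refl => exact subset_rfl
    | step _ ih => exact ih.trans (by rw [hGsSucc]; exact Finset.subset_insert _ _)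
  have hcard : ∀ r, r ≤ (Gs r).card := by
    intro r
    induction r with
    | zero => omega
    | succ r ih =>
      rw [hGsSucc, Finset.card_insert_of_notMem (fun hc => by
        have := hf1 (Gs r) (hGsInv r) _ hc; omega)]
      omega
  have hIinf : (⋃ r, (↑(Gs r) : Set ℕ)).Infinite := by
    intro hfin
    have hsub : ∀ r, Gs r ⊆ hfin.toFinset := by
      intro r x hx
      rw [Set.Finite.mem_toFinset]
      exact Set.mem_iUnion.2 ⟨r, hx⟩
    have := Finset.card_le_card (hsub (hfin.toFinset.card + 1))
    have := hcard (hfin.toFinset.card + 1)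
    omega
  refine ⟨n '' (⋃ r, ↑(Gs r)), hIinf.image hsm.injective.injOn, Set.image_subset_range _ _,
    fun s hs => ?_⟩
  obtain ⟨R, hR⟩ : ∃ R, ∀ x ∈ s, ∀ r, R ≤ r → x ∈ (Gs r).image n := by
    apply finset_bound s (fun x r => x ∈ (Gs r).image n)
    intro x hx
    obtain ⟨i, hi, rfl⟩ := hs hx
    obtain ⟨r, hr⟩ := Set.mem_iUnion.1 hi
    exact ⟨r, fun r' hr' => Finset.mem_image_of_mem n (hGsMono r r' hr' hr)⟩
  exact hGsInv R s (fun x hx => hR x hx R le_rfl)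

end EllAux
namespace EllAux

lemma EllSet_shrink {γ : Finset ℕ} {N : Set ℕ} {X : InfNat} (hX : X ∈ EllSet γ N) :
    EllSet γ X.1 ⊆ EllSet γ N :=
  fun _Y hY => ⟨hY.1, fun y hy => hX.2.1 ⟨hY.2.1 hy, hy.2⟩, hY.2.2⟩

lemma EllSet_refine {β γ : Finset ℕ} {X : InfNat}
    (hγX : ↑γ ⊆ X.1)
    (hβi : ∀ a ∈ β, ∀ b ∈ X.1, b ∉ β → a < b)
    (hsub : β ⊆ γ) : EllSet γ X.1 ⊆ EllSet β X.1 := by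
  rintro Y ⟨h1, h2, h3⟩
  refine ⟨(Finset.coe_subset.2 hsub).trans h1, ?_, ?_⟩
  · intro y hy
    by_cases hc : y ∈ γ
    · exact hγX hc
    · exact h2 ⟨hy.1, hc⟩
  · intro a ha b hb hbβ
    by_cases hc : b ∈ γ
    · exact hβi a ha b (hγX hc) hbβ
    · exact h3 a (hsub ha) b hb hc

lemma exists_basic {X : InfNat} {O : Set InfNat}
    (hO : TopologicalSpace.GenerateOpen
      {S | ∃ (β : Finset ℕ) (N : Set ℕ), N.Infinite ∧ S = EllSet β N} O)
    (hX : X ∈ O) :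
    ∃ β : Finset ℕ, ↑β ⊆ X.1 ∧ (∀ a ∈ β, ∀ b ∈ X.1, b ∉ β → a < b) ∧
      EllSet β X.1 ⊆ O := by
  induction hO with
  | @basic S hS =>
    obtain ⟨γ, N, hN, rfl⟩ := hS
    exact ⟨γ, hX.1, hX.2.2, EllSet_shrink hX⟩
  | univ =>
    exact ⟨∅, by simp, by simp, fun _ _ => trivial⟩
  | @inter s t hs ht ihs iht =>
    obtain ⟨β1, hb1, hi1, hs1⟩ := ihs hX.1
    obtain ⟨β2, hb2, hi2, hs2⟩ := iht hX.2
    have hbu : ↑(β1 ∪ β2) ⊆ X.1 := by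
      rw [Finset.coe_union]
      exact Set.union_subset hb1 hb2
    have hiu : ∀ a ∈ β1 ∪ β2, ∀ b ∈ X.1, b ∉ β1 ∪ β2 → a < b := by
      intro a ha b hb hbn
      rcases Finset.mem_union.1 ha with ha | ha
      · exact hi1 a ha b hb (fun hc => hbn (Finset.mem_union_left _ hc))
      · exact hi2 a ha b hb (fun hc => hbn (Finset.mem_union_right _ hc))
    refine ⟨β1 ∪ β2, hbu, hiu, ?_⟩
    intro Y hY
    exact ⟨hs1 (EllSet_refine hbu hi1 Finset.subset_union_left hY),
      hs2 (EllSet_refine hbu hi2 Finset.subset_union_right hY)⟩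
  | @sUnion S hS ih =>
    obtain ⟨o, hoS, hXo⟩ := hX
    obtain ⟨β, h1, h2, h3⟩ := ih o hoS hXo
    exact ⟨β, h1, h2, h3.trans (Set.subset_sUnion_of_mem hoS)⟩

lemma mem_closure_of_basics {U : Set InfNat} {X : InfNat}
    (h : ∀ β : Finset ℕ, ↑β ⊆ X.1 → (∀ a ∈ β, ∀ b ∈ X.1, b ∉ β → a < b) →
      ∃ Y, Y ∈ EllSet β X.1 ∧ Y ∈ U) :
    X ∈ @closure InfNat EllentuckTop U := by
  letI : TopologicalSpace InfNat := EllentuckTop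
  rw [mem_closure_iff]
  intro O hO hXO
  have hO' : TopologicalSpace.GenerateOpen
      {S | ∃ (β : Finset ℕ) (N : Set ℕ), N.Infinite ∧ S = EllSet β N} O := hO
  obtain ⟨β, h1, h2, h3⟩ := exists_basic hO' hXO
  obtain ⟨Y, hY1, hY2⟩ := h β h1 h2
  exact ⟨Y, h3 hY1, hY2⟩

end EllAux
namespace EllAux

/-- State of the fusion construction. -/
structure St (U : Set InfNat) (M : Set ℕ) (α : Finset ℕ) where
  N : Set ℕ
  F : Finset ℕ
  hInf : N.Infinite
  hM : N ⊆ M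
  hα : ∀ a ∈ α, ∀ b ∈ N, a < b
  hF : ∀ m ∈ F, ∀ b ∈ N, m < b
  hDec : ∀ t ∈ F.powerset, Accepts U (α ∪ t) N ∨ ¬ Meets U (α ∪ t) N

lemma step_ex {U : Set InfNat} {M : Set ℕ} {α : Finset ℕ} (S : St U M α) :
    ∃ S' : St U M α, S'.N ⊆ S.N ∧ (∀ x ∈ S'.N, sInf S.N < x) ∧
      S'.F = insert (sInf S.N) S.F := by
  classical
  set nn := sInf S.N with hnn
  have h1 : (S.N \ Set.Iic nn).Infinite := S.hInf.diff (Set.finite_Iic nn)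
  obtain ⟨N', hsub, hinf, hdec⟩ :=
    decide_family U ((insert nn S.F).powerset.image (fun t => α ∪ t)) (S.N \ Set.Iic nn) h1
  have hsubN : N' ⊆ S.N := hsub.trans Set.diff_subset
  have hgt : ∀ x ∈ N', nn < x := by
    intro x hx
    have := (hsub hx).2
    simpa [Set.mem_Iic] using this
  refine ⟨⟨N', insert nn S.F, hinf, hsubN.trans S.hM,
    fun a ha b hb => S.hα a ha b (hsubN hb), ?_, ?_⟩, hsubN, hgt, rfl⟩
  · intro m hm b hb
    rcases Finset.mem_insert.1 hm with rfl | hm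
    · exact hgt b hb
    · exact S.hF m hm b (hsubN hb)
  · intro t ht
    exact hdec (α ∪ t) (Finset.mem_image_of_mem _ ht)

noncomputable def stepSt {U : Set InfNat} {M : Set ℕ} {α : Finset ℕ} (S : St U M α) :
    St U M α := (step_ex S).choose

lemma stepSt_spec {U : Set InfNat} {M : Set ℕ} {α : Finset ℕ} (S : St U M α) :
    (stepSt S).N ⊆ S.N ∧ (∀ x ∈ (stepSt S).N, sInf S.N < x) ∧
      (stepSt S).F = insert (sInf S.N) S.F := (step_ex S).choose_spec

noncomputable def chain {U : Set InfNat} {M : Set ℕ} {α : Finset ℕ} (S0 : St U M α) :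
    ℕ → St U M α
  | 0 => S0
  | i+1 => stepSt (chain S0 i)

end EllAux

open EllAux in
theorem ellentuck_dichotomy_aux (U : Set InfNat) (M : Set ℕ) (hM : M.Infinite) (α : Finset ℕ) :
    ∃ L ⊆ M, L.Infinite ∧
      (EllSet α L ⊆ @closure InfNat EllentuckTop U ∨ EllSet α L ⊆ Uᶜ) := by
  classical
  by_cases hB : ∀ N' : Set ℕ, N' ⊆ M → N'.Infinite → Meets U α N'
  · -- build the fusion sequence
    have hαb : ∀ a ∈ α, ∀ b ∈ M \ Set.Iic (α.sup id), a < b := by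
      intro a ha b hb
      have h1 : a ≤ α.sup id := Finset.le_sup (f := id) ha
      have h2 : ¬ b ≤ α.sup id := by simpa [Set.mem_Iic] using hb.2
      omega
    have hDec0 : ∀ t ∈ (∅ : Finset ℕ).powerset,
        Accepts U (α ∪ t) (M \ Set.Iic (α.sup id)) ∨
          ¬ Meets U (α ∪ t) (M \ Set.Iic (α.sup id)) := by
      intro t ht
      rw [Finset.powerset_empty, Finset.mem_singleton] at ht
      subst ht
      rw [Finset.union_empty]
      exact Or.inl (fun N' h hi => hB N' (h.trans Set.diff_subset) hi)
    set S0 : St U M α :=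
      ⟨M \ Set.Iic (α.sup id), ∅, hM.diff (Set.finite_Iic _), Set.diff_subset, hαb,
        fun m hm => absurd hm (Finset.notMem_empty m), hDec0⟩ with hS0
    set Nseq : ℕ → Set ℕ := fun i => (chain S0 i).N with hNseq
    set nf : ℕ → ℕ := fun i => sInf (Nseq i) with hnf
    have hchain : ∀ i, chain S0 (i+1) = stepSt (chain S0 i) := fun i => rfl
    have hsub : ∀ i, Nseq (i+1) ⊆ Nseq i := fun i => (stepSt_spec (chain S0 i)).1
    have hgt : ∀ i, ∀ x ∈ Nseq (i+1), nf i < x := fun i => (stepSt_spec (chain S0 i)).2.1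
    have hFeq : ∀ i, (chain S0 (i+1)).F = insert (nf i) (chain S0 i).F :=
      fun i => (stepSt_spec (chain S0 i)).2.2
    have hmono : ∀ i j, i ≤ j → Nseq j ⊆ Nseq i := by
      intro i j h
      induction h with
      | refl => exact subset_rfl
      | @step j _ ih => exact (hsub j).trans ih
    have hnmem : ∀ i, nf i ∈ Nseq i := fun i => Nat.sInf_mem (chain S0 i).hInf.nonempty
    have htail : ∀ i j, i ≤ j → nf j ∈ Nseq i := fun i j h => hmono i j h (hnmem j)
    have hsm : StrictMono nf :=
      strictMono_nat_of_lt_succ (fun i => hgt i _ (hnmem (i+1)))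
    have hFmem : ∀ i j, i < j → nf i ∈ (chain S0 j).F := by
      intro i j h
      induction j with
      | zero => omega
      | succ j ih =>
        rw [hFeq j]
        rcases Nat.lt_succ_iff_lt_or_eq.1 h with h | h
        · exact Finset.mem_insert_of_mem (ih h)
        · subst h; exact Finset.mem_insert_self _ _
    have hdec' : ∀ j (t : Finset ℕ), (∀ x ∈ t, ∃ i, i < j ∧ nf i = x) →
        Accepts U (α ∪ insert (nf j) t) (Nseq (j+1)) ∨
          ¬ Meets U (α ∪ insert (nf j) t) (Nseq (j+1)) := by
      intro j t hidx
      apply (chain S0 (j+1)).hDec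
      rw [Finset.mem_powerset]
      intro x hx
      rcases Finset.mem_insert.1 hx with rfl | hx
      · exact hFmem j (j+1) (Nat.lt_succ_self j)
      · obtain ⟨i, hij, rfl⟩ := hidx x hx
        exact hFmem i (j+1) (by omega)
    have hG0 : Good U Nseq nf α ∅ := by
      refine ⟨by simp, 0, ?_, fun j _ => htail 0 j (Nat.zero_le j)⟩
      rw [Finset.union_empty]
      exact fun N' h hi => hB N' (h.trans (chain S0 0).hM) hi
    obtain ⟨T, hTinf, hTrange, hTgood⟩ := thinning htail hsm hdec' hG0
    have hTM : T ⊆ M := by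
      intro x hx
      obtain ⟨i, rfl⟩ := hTrange hx
      exact (chain S0 i).hM (hnmem i)
    refine ⟨T, hTM, hTinf, Or.inl ?_⟩
    intro X hX
    obtain ⟨hαX, hXT, hαi⟩ := hX
    apply mem_closure_of_basics
    intro β hβX hβi
    set γ : Finset ℕ := α ∪ β with hγ
    have hγX : ↑γ ⊆ X.1 := by
      rw [hγ, Finset.coe_union]
      exact Set.union_subset hαX hβX
    have hγi : ∀ a ∈ γ, ∀ b ∈ X.1, b ∉ γ → a < b := by
      intro a ha b hb hbn
      rcases Finset.mem_union.1 ha with ha | ha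
      · exact hαi a ha b hb (fun hc => hbn (Finset.mem_union_left _ hc))
      · exact hβi a ha b hb (fun hc => hbn (Finset.mem_union_right _ hc))
    set s : Finset ℕ := β \ α with hs
    have hαs : α ∪ s = γ := Finset.union_sdiff_self_eq_union
    have hsT : ↑s ⊆ T := by
      intro x hx
      rw [hs, Finset.coe_sdiff] at hx
      exact hXT ⟨hβX hx.1, hx.2⟩
    obtain ⟨hmem, i₀, hAcc, hIn⟩ := hTgood s hsT
    set N' : Set ℕ := X.1 \ ↑γ with hN'
    have hN'inf : N'.Infinite := X.2.diff γ.finite_toSet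
    have hN'sub : N' ⊆ Nseq i₀ := by
      intro y hy
      have hyT : y ∈ T := by
        apply hXT
        refine ⟨hy.1, fun hc => hy.2 ?_⟩
        rw [hγ, Finset.coe_union]
        exact Or.inl hc
      obtain ⟨j, rfl⟩ := hTrange hyT
      refine hIn j ?_
      intro x hx
      have hxγ : x ∈ γ := by
        rw [hγ]
        exact Finset.mem_union_right _ (Finset.mem_sdiff.1 hx).1
      exact hγi x hxγ (nf j) hy.1 (fun hc => hy.2 hc)
    have hMeets : Meets U γ N' := by
      rw [← hαs]
      exact hAcc N' hN'sub hN'inf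
    obtain ⟨Y, hY, hYU⟩ := hMeets
    refine ⟨Y, ?_, hYU⟩
    have hY1 : Y ∈ EllSet γ X.1 := EllSet_mono Set.diff_subset hY
    exact EllSet_refine hγX hβi (by rw [hγ]; exact Finset.subset_union_right) hY1
  · push_neg at hB
    obtain ⟨N', hsub, hinf, hnm⟩ := hB
    exact ⟨N', hsub, hinf, Or.inr (fun X hX hXU => hnm ⟨X, hX, hXU⟩)⟩

/-- Theorem 4.6: for any family `U` of infinite subsets of `ℕ`, any infinite `M` and finite
`α`, there is an infinite `L ⊆ M` with `[α, L]` inside the Ellentuck closure of `U`, or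
`[α, L]` disjoint from `U`. -/
theorem ellentuck_dichotomy (U : Set InfNat) (M : Set ℕ) (hM : M.Infinite) (α : Finset ℕ) :
    ∃ L ⊆ M, L.Infinite ∧
      (EllSet α L ⊆ @closure InfNat EllentuckTop U ∨ EllSet α L ⊆ Uᶜ) :=
  ellentuck_dichotomy_aux U M hM α
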